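/- Let k be a field of characteristic 0 and let Q = k[x]/(xⁿ) with n ≥ 1. The bilinear form β(g,h) = coefficient of x^{n−1} in gh is nondegenerate on Q, and its class in GW(k) is (n/2)·ℍ if n is even, and ⟨1⟩ + ((n−1)/2)·ℍ if n is odd. -/

import Mathlib

open Polynomial

lemma sum_rev_even_aux_19 (k : Type) [Field k] (s : ℕ) (g : Fin (2 * s) → k) :
    ∑ i : Fin (2 * s), g i =
      ∑ m : Fin s, (g ⟨m.1, by have := m.2; omega⟩ + g ⟨2 * s - 1 - m.1, by have := m.2; omega⟩) := by
  have hσ : Function.Bijective (fun p : Fin s × Fin 2 =>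
      if p.2 = 0 then (⟨p.1.1, by have := p.1.2; omega⟩ : Fin (2 * s))
      else ⟨2 * s - 1 - p.1.1, by have := p.1.2; omega⟩) := by
    rw [Fintype.bijective_iff_injective_and_card]
    constructor
    · rintro ⟨⟨m, hm⟩, j⟩ ⟨⟨m', hm'⟩, j'⟩ h
      fin_cases j <;> fin_cases j' <;> simp_all [Fin.ext_iff] <;> omega
    · simp [Fintype.card_prod]; ring
  rw [← Function.Bijective.sum_comp hσ g, Fintype.sum_prod_type]
  refine Finset.sum_congr rfl fun m _ => ?_
  rw [Fin.sum_univ_two]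
  norm_num

lemma even_aux_19 (k : Type) [Field k] [CharZero k] (n s : ℕ) (hs : n = 2 * s) :
    ∃ E : (Fin n → k) ≃ₗ[k] (Fin s × Fin 2 → k),
      ∀ a c : Fin n → k,
        (∑ i : Fin n, a i * c i.rev) =
        ∑ m : Fin s, (E a (m, 0) * E c (m, 0) - E a (m, 1) * E c (m, 1)) := by
  subst hs
  set i0 : Fin s → Fin (2 * s) := fun m => ⟨m.1, by have := m.2; omega⟩ with hi0
  set i1 : Fin s → Fin (2 * s) := fun m => ⟨2 * s - 1 - m.1, by have := m.2; omega⟩ with hi1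
  set sgn : Fin 2 → k := ![2⁻¹, -2⁻¹] with hsgn
  have hsgn0 : sgn 0 = 2⁻¹ := rfl
  have hsgn1 : sgn 1 = -2⁻¹ := rfl
  refine ⟨{
    toFun := fun a p => a (i0 p.1) + sgn p.2 * a (i1 p.1)
    map_add' := by intro a b; funext p; simp only [Pi.add_apply]; ring
    map_smul' := by intro t a; funext p; simp only [Pi.smul_apply, smul_eq_mul,
      RingHom.id_apply]; ring
    invFun := fun f i =>
      if h : (i : ℕ) < s then (f (⟨i, h⟩, 0) + f (⟨i, h⟩, 1)) / 2
      else f (⟨2 * s - 1 - i, by have := i.2; omega⟩, 0)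
        - f (⟨2 * s - 1 - i, by have := i.2; omega⟩, 1)
    left_inv := ?_
    right_inv := ?_ }, ?_⟩
  · intro a
    funext i
    by_cases hi : (i : ℕ) < s
    · simp only [dif_pos hi, hsgn0, hsgn1]
      have h0 : i0 ⟨i, hi⟩ = i := by simp [hi0]
      rw [h0]; ring
    · simp only [dif_neg hi, hsgn0, hsgn1]
      have h0 : i1 ⟨2 * s - 1 - i, by have := i.2; omega⟩ = i := by
        simp only [hi1]; ext; simp; have := i.2; omega
      rw [h0]; ring
  · intro f
    funext p
    obtain ⟨m, j⟩ := p
    have hm : ((i0 m : Fin (2*s)) : ℕ) < s := m.2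
    have hm' : ¬ (((i1 m : Fin (2*s)) : ℕ) < s) := by simp [hi1]; have := m.2; omega
    have e0 : (⟨((i0 m : Fin (2*s)) : ℕ), hm⟩ : Fin s) = m := by ext; simp [hi0]
    have e1 : (⟨2 * s - 1 - ((i1 m : Fin (2*s)) : ℕ), by have := (i1 m).2; have := m.2; omega⟩ : Fin s) = m := by
      ext; simp [hi1]; have := m.2; omega
    fin_cases j <;>
    · simp only [dif_pos hm, dif_neg hm', Fin.mk_zero, Fin.mk_one, hsgn0, hsgn1, e0, e1]
      ring
  · intro a c
    simp only [LinearEquiv.coe_mk, LinearMap.coe_mk, AddHom.coe_mk]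
    rw [sum_rev_even_aux_19 k s (fun i => a i * c i.rev)]
    refine Finset.sum_congr rfl fun m _ => ?_
    have r0 : (Fin.rev (i0 m)) = i1 m := by
      have := m.2; apply Fin.ext; simp only [hi0, hi1, Fin.val_rev]; omega
    have r1 : (Fin.rev (i1 m)) = i0 m := by
      have := m.2; apply Fin.ext; simp only [hi0, hi1, Fin.val_rev]; omega
    show a (i0 m) * c (Fin.rev (i0 m)) + a (i1 m) * c (Fin.rev (i1 m)) = _
    rw [r0, r1, hsgn0, hsgn1]
    ring

lemma sum_rev_odd_aux_19 (k : Type) [Field k] (s : ℕ) (g : Fin (2 * s + 1) → k) :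
    ∑ i : Fin (2 * s + 1), g i =
      g ⟨s, by omega⟩ +
      ∑ m : Fin s, (g ⟨m.1, by have := m.2; omega⟩ + g ⟨2 * s - m.1, by have := m.2; omega⟩) := by
  have hσ : Function.Bijective (fun x : Unit ⊕ Fin s × Fin 2 =>
      match x with
      | .inl _ => (⟨s, by omega⟩ : Fin (2 * s + 1))
      | .inr p => if p.2 = 0 then (⟨p.1.1, by have := p.1.2; omega⟩ : Fin (2 * s + 1))
          else ⟨2 * s - p.1.1, by have := p.1.2; omega⟩) := by
    rw [Fintype.bijective_iff_injective_and_card]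
    constructor
    · rintro (⟨⟩ | ⟨⟨m, hm⟩, j⟩) (⟨⟩ | ⟨⟨m', hm'⟩, j'⟩) h
      · rfl
      · fin_cases j' <;> simp_all [Fin.ext_iff] <;> omega
      · fin_cases j <;> simp_all [Fin.ext_iff] <;> omega
      · fin_cases j <;> fin_cases j' <;> simp_all [Fin.ext_iff] <;> omega
    · simp [Fintype.card_prod, Fintype.card_sum]; ring
  rw [← Function.Bijective.sum_comp hσ g, Fintype.sum_sum_type, Fintype.sum_prod_type]
  simp only [Finset.univ_unique, Finset.sum_singleton]
  congr 1
  refine Finset.sum_congr rfl fun m _ => ?_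
  rw [Fin.sum_univ_two]
  norm_num

lemma odd_aux_19 (k : Type) [Field k] [CharZero k] (n s : ℕ) (hs : n = 2 * s + 1) :
    ∃ E : (Fin n → k) ≃ₗ[k] (Unit ⊕ Fin s × Fin 2 → k),
      ∀ a c : Fin n → k,
        (∑ i : Fin n, a i * c i.rev) =
        E a (Sum.inl ()) * E c (Sum.inl ()) +
        ∑ m : Fin s, (E a (Sum.inr (m, 0)) * E c (Sum.inr (m, 0)) -
          E a (Sum.inr (m, 1)) * E c (Sum.inr (m, 1))) := by
  subst hs
  set i0 : Fin s → Fin (2 * s + 1) := fun m => ⟨m.1, by have := m.2; omega⟩ with hi0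
  set i1 : Fin s → Fin (2 * s + 1) := fun m => ⟨2 * s - m.1, by have := m.2; omega⟩ with hi1
  set mid : Fin (2 * s + 1) := ⟨s, by omega⟩ with hmid
  set sgn : Fin 2 → k := ![2⁻¹, -2⁻¹] with hsgn
  have hsgn0 : sgn 0 = 2⁻¹ := rfl
  have hsgn1 : sgn 1 = -2⁻¹ := rfl
  refine ⟨{
    toFun := fun a x => match x with
      | .inl _ => a mid
      | .inr p => a (i0 p.1) + sgn p.2 * a (i1 p.1)
    map_add' := by
      intro a b; funext x
      rcases x with ⟨⟩ | ⟨p⟩ <;> simp only [Pi.add_apply] <;> ring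
    map_smul' := by
      intro t a; funext x
      rcases x with ⟨⟩ | ⟨p⟩ <;>
        simp only [Pi.smul_apply, smul_eq_mul, RingHom.id_apply] <;> ring
    invFun := fun f i =>
      if h : (i : ℕ) < s then (f (.inr (⟨i, h⟩, 0)) + f (.inr (⟨i, h⟩, 1))) / 2
      else if h2 : (i : ℕ) = s then f (.inl ())
      else f (.inr (⟨2 * s - i, by have := i.2; omega⟩, 0))
        - f (.inr (⟨2 * s - i, by have := i.2; omega⟩, 1))
    left_inv := ?_
    right_inv := ?_ }, ?_⟩
  · intro a
    funext i
    by_cases hi : (i : ℕ) < s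
    · simp only [dif_pos hi, hsgn0, hsgn1]
      have h0 : i0 ⟨i, hi⟩ = i := by simp [hi0]
      rw [h0]; ring
    · by_cases hi2 : (i : ℕ) = s
      · simp only [dif_neg hi, dif_pos hi2]
        have : mid = i := by simp [hmid]; ext; simp [hi2.symm]
        rw [this]
      · simp only [dif_neg hi, dif_neg hi2, hsgn0, hsgn1]
        have h0 : i1 ⟨2 * s - i, by have := i.2; omega⟩ = i := by
          simp only [hi1]; ext; simp; have := i.2; omega
        rw [h0]; ring
  · intro f
    funext x
    rcases x with ⟨⟩ | ⟨m, j⟩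
    · show (if h : (mid : ℕ) < s then _ else _) = _
      rw [dif_neg (by simp [hmid]), dif_pos (by simp [hmid])]
    · have hm : ((i0 m : Fin (2*s+1)) : ℕ) < s := m.2
      have hm' : ¬ (((i1 m : Fin (2*s+1)) : ℕ) < s) := by simp [hi1]; have := m.2; omega
      have hm'' : ¬ (((i1 m : Fin (2*s+1)) : ℕ) = s) := by simp [hi1]; have := m.2; omega
      have e0 : (⟨((i0 m : Fin (2*s+1)) : ℕ), hm⟩ : Fin s) = m := by ext; simp [hi0]
      have e1 : (⟨2 * s - ((i1 m : Fin (2*s+1)) : ℕ), by have := m.2; omega⟩ : Fin s) = m := by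
        ext; simp [hi1]; have := m.2; omega
      fin_cases j <;>
      · simp only [dif_pos hm, dif_neg hm', dif_neg hm'', Fin.mk_zero, Fin.mk_one,
          hsgn0, hsgn1, e0, e1]
        ring
  · intro a c
    simp only [LinearEquiv.coe_mk, LinearMap.coe_mk, AddHom.coe_mk]
    rw [sum_rev_odd_aux_19 k s (fun i => a i * c i.rev)]
    have rm : (Fin.rev mid) = mid := by
      apply Fin.ext; simp only [hmid, Fin.val_rev]; omega
    congr 1
    · show a mid * c (Fin.rev mid) = a mid * c mid
      rw [rm]
    · refine Finset.sum_congr rfl fun m _ => ?_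
      have r0 : (Fin.rev (i0 m)) = i1 m := by
        have := m.2; apply Fin.ext; simp only [hi0, hi1, Fin.val_rev]; omega
      have r1 : (Fin.rev (i1 m)) = i0 m := by
        have := m.2; apply Fin.ext; simp only [hi0, hi1, Fin.val_rev]; omega
      show a (i0 m) * c (Fin.rev (i0 m)) + a (i1 m) * c (Fin.rev (i1 m)) = _
      rw [r0, r1, hsgn0, hsgn1]
      ring

/-- Let `k` be a field of characteristic 0 and `Q = k[x]/(xⁿ)` with `n ≥ 1`.
The bilinear form `β(g, h) = (coefficient of x^{n-1} in gh)` (the Scheja–Storch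
form of `x ↦ xⁿ` at the origin, well defined on the quotient) is nondegenerate
on `Q`, and its class in `GW(k)` is `(n/2)·ℍ` if `n` is even and
`⟨1⟩ + ((n-1)/2)·ℍ` if `n` is odd. -/
theorem stmt_19 (k : Type) [Field k] [CharZero k] (n : ℕ) (hn : 1 ≤ n)
    (I : Ideal (Polynomial k)) (hI : I = Ideal.span {(X : Polynomial k) ^ n})
    (B : (Polynomial k ⧸ I) →ₗ[k] (Polynomial k ⧸ I) →ₗ[k] k)
    (hB : ∀ g h : Polynomial k,
      B (Ideal.Quotient.mk I g) (Ideal.Quotient.mk I h) = (g * h).coeff (n - 1)) :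
    (∀ q : Polynomial k ⧸ I, (∀ r, B q r = 0) → q = 0) ∧
    (Even n → ∃ e : (Polynomial k ⧸ I) ≃ₗ[k] (Fin (n / 2) × Fin 2 → k),
      ∀ q r, B q r = ∑ m : Fin (n / 2),
        (e q (m, 0) * e r (m, 0) - e q (m, 1) * e r (m, 1))) ∧
    (Odd n → ∃ e : (Polynomial k ⧸ I) ≃ₗ[k] (Unit ⊕ Fin ((n - 1) / 2) × Fin 2 → k),
      ∀ q r, B q r = e q (Sum.inl ()) * e r (Sum.inl ()) +
        ∑ m : Fin ((n - 1) / 2),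
          (e q (Sum.inr (m, 0)) * e r (Sum.inr (m, 0)) -
           e q (Sum.inr (m, 1)) * e r (Sum.inr (m, 1)))) := by
  subst hI
  have hmono : ((X : Polynomial k) ^ n).Monic := monic_X_pow n
  let pb : PowerBasis k (AdjoinRoot ((X : Polynomial k) ^ n)) := AdjoinRoot.powerBasis' hmono
  have hdim : pb.dim = n := natDegree_X_pow n
  let b : Module.Basis (Fin n) k (Polynomial k ⧸ Ideal.span {(X : Polynomial k) ^ n}) :=
    pb.basis.reindex (finCongr hdim)
  have hb : ∀ i : Fin n, b i =
      Ideal.Quotient.mk (Ideal.span {(X : Polynomial k) ^ n}) (X ^ (i : ℕ)) := by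
    intro i
    show pb.basis.reindex (finCongr hdim) i = _
    rw [Module.Basis.reindex_apply, pb.basis_eq_pow,
      show (((finCongr hdim).symm i : Fin pb.dim) : ℕ) = (i : ℕ) from rfl, map_pow]
    rfl
  have hBij : ∀ i j : Fin n, B (b i) (b j) = if j = Fin.rev i then 1 else 0 := by
    intro i j
    rw [hb, hb, hB, ← pow_add, coeff_X_pow]
    have hi := i.2; have hj := j.2
    by_cases h : j = Fin.rev i
    · rw [if_pos h, if_pos]
      subst h
      simp only [Fin.val_rev]
      omega
    · rw [if_neg h, if_neg]
      intro hc
      exact h (Fin.ext (by simp only [Fin.val_rev]; omega))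
  have hinner : ∀ (f : Fin n → k) (x : Fin n),
      (∑ y : Fin n, if x = y.rev then f y else 0) = f x.rev := by
    intro f x
    rw [Finset.sum_eq_single x.rev]
    · rw [if_pos (Fin.rev_rev x).symm]
    · intro y _ hy
      exact if_neg fun hc => hy (by rw [hc, Fin.rev_rev])
    · intro h; exact absurd (Finset.mem_univ _) h
  have hBf : ∀ q r, B q r = ∑ i : Fin n, b.equivFun q i * b.equivFun r (Fin.rev i) := by
    intro q r
    conv_lhs => rw [← b.sum_equivFun q, ← b.sum_equivFun r]
    simp only [map_sum, map_smul, LinearMap.sum_apply, LinearMap.smul_apply, smul_eq_mul,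
      hBij, mul_ite, mul_one, mul_zero, Finset.sum_ite_eq', Finset.mem_univ, if_true, hinner]
    exact Fintype.sum_equiv Fin.revPerm _ _ (fun x => by
      simp only [Fin.revPerm_apply, Fin.rev_rev]; ring)
  refine ⟨?_, ?_, ?_⟩
  · intro q hq
    have hcoord : ∀ i, b.equivFun q i = 0 := by
      intro i
      have h := hq (b i.rev)
      rw [hBf] at h
      have : ∀ j : Fin n, b.equivFun q j * b.equivFun (b i.rev) (Fin.rev j)
          = if j = i then b.equivFun q j else 0 := by
        intro j
        rw [Module.Basis.equivFun_self]
        by_cases hji : j = i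
        · subst hji
          rw [if_pos rfl, if_pos rfl, mul_one]
        · rw [if_neg hji, if_neg (fun hc => hji (by
            have := congrArg Fin.rev hc
            rw [Fin.rev_rev, Fin.rev_rev] at this
            exact this.symm)), mul_zero]
      rw [Finset.sum_congr rfl (fun j _ => this j)] at h
      simpa using h
    have h0 : b.equivFun q = 0 := funext hcoord
    exact b.equivFun.map_eq_zero_iff.mp h0
  · intro hev
    obtain ⟨t, ht⟩ := hev
    obtain ⟨E, hE⟩ := even_aux_19 k n (n / 2) (by omega)
    refine ⟨b.equivFun.trans E, fun q r => ?_⟩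
    rw [hBf]
    simpa only [LinearEquiv.trans_apply] using hE (b.equivFun q) (b.equivFun r)
  · intro hodd
    obtain ⟨t, ht⟩ := hodd
    obtain ⟨E, hE⟩ := odd_aux_19 k n ((n - 1) / 2) (by omega)
    refine ⟨b.equivFun.trans E, fun q r => ?_⟩
    rw [hBf]
    simpa only [LinearEquiv.trans_apply] using hE (b.equivFun q) (b.equivFun r)
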